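/- Let a > 0, let b ∈ ℝ^n be a row vector, let m ∈ O(h), and let x ∈ ℝ^n be a point with D_{a,b,m}(x) ≠ 0. Then φ_{a,b,m} is differentiable at x and its Jacobian matrix φ'(x) satisfies φ'(x)ᵀ h φ'(x) = Ω_{a,b,m}(x)² h; that is, the pullback under φ_{a,b,m} of the flat metric determined by h equals Ω_{a,b,m}² times that metric, so φ_{a,b,m} is a conformal transformation with conformal factor Ω_{a,b,m}. -/

import Mathlib

open Matrix

noncomputable section

abbrev Idx (p q : ℕ) : Type := Unit ⊕ (Fin (p + q)) ⊕ Unit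

/-- The diagonal quadratic form of signature `(p,q)` on `ℝ^n`, `n = p + q`. -/
def hMat (p q : ℕ) : Matrix (Fin (p + q)) (Fin (p + q)) ℝ :=
  Matrix.diagonal fun i => if (i : ℕ) < p then (1 : ℝ) else -1

/-- The quadratic form of signature `(p+1,q+1)` on `ℝ^{n+2}`, in block form
`[[0,0,1],[0,h,0],[1,0,0]]`. -/
def htMat (p q : ℕ) : Matrix (Idx p q) (Idx p q) ℝ :=
  Matrix.of fun I J =>
    match I, J with
    | Sum.inl _, Sum.inr (Sum.inr _) => (1 : ℝ)
    | Sum.inr (Sum.inr _), Sum.inl _ => 1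
    | Sum.inr (Sum.inl i), Sum.inr (Sum.inl j) => hMat p q i j
    | _, _ => 0

/-- The first standard basis vector `e₀` of `ℝ^{n+2}`. -/
def e0 (p q : ℕ) : Idx p q → ℝ := fun I =>
  match I with
  | Sum.inl _ => 1
  | _ => 0

/-- `c = -(2a)⁻¹ b h⁻¹ bᵀ`. -/
def cVal (p q : ℕ) (a : ℝ) (b : Fin (p + q) → ℝ) : ℝ :=
  -(2 * a)⁻¹ * (b ⬝ᵥ ((hMat p q)⁻¹ *ᵥ b))

/-- `d = -a⁻¹ m h⁻¹ bᵀ`. -/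
def dVec (p q : ℕ) (a : ℝ) (b : Fin (p + q) → ℝ)
    (m : Matrix (Fin (p + q)) (Fin (p + q)) ℝ) : Fin (p + q) → ℝ :=
  (-a⁻¹) • (m *ᵥ ((hMat p q)⁻¹ *ᵥ b))

/-- The element `p(a,b,m)` of the parabolic subgroup, in block form
`[[a,b,c],[0,m,d],[0,0,a⁻¹]]`. -/
def pMat (p q : ℕ) (a : ℝ) (b : Fin (p + q) → ℝ)
    (m : Matrix (Fin (p + q)) (Fin (p + q)) ℝ) : Matrix (Idx p q) (Idx p q) ℝ :=
  Matrix.of fun I J =>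
    match I, J with
    | Sum.inl _, Sum.inl _ => a
    | Sum.inl _, Sum.inr (Sum.inl j) => b j
    | Sum.inl _, Sum.inr (Sum.inr _) => cVal p q a b
    | Sum.inr (Sum.inl i), Sum.inr (Sum.inl j) => m i j
    | Sum.inr (Sum.inl i), Sum.inr (Sum.inr _) => dVec p q a b m i
    | Sum.inr (Sum.inr _), Sum.inr (Sum.inr _) => a⁻¹
    | _, _ => 0

/-- `|x|² = xᵀ h x`. -/
def normSq (p q : ℕ) (x : Fin (p + q) → ℝ) : ℝ := x ⬝ᵥ (hMat p q *ᵥ x)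

/-- The denominator `D(x) = a + b x - ½ c |x|²`. -/
def Dden (p q : ℕ) (a : ℝ) (b x : Fin (p + q) → ℝ) : ℝ :=
  a + b ⬝ᵥ x - (1 / 2) * cVal p q a b * normSq p q x

/-- The conformal transformation `φ(x) = (m x - ½|x|² d)/D(x)`. -/
def phiMap (p q : ℕ) (a : ℝ) (b : Fin (p + q) → ℝ)
    (m : Matrix (Fin (p + q)) (Fin (p + q)) ℝ) (x : Fin (p + q) → ℝ) :
    Fin (p + q) → ℝ :=
  (Dden p q a b x)⁻¹ • (m *ᵥ x - ((1 / 2) * normSq p q x) • dVec p q a b m)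

/-- The conformal factor `Ω(x) = D(x)⁻¹`. -/
def OmegaFn (p q : ℕ) (a : ℝ) (b : Fin (p + q) → ℝ) (x : Fin (p + q) → ℝ) : ℝ :=
  (Dden p q a b x)⁻¹

/-- Jacobian matrix of a map at a point: `J i j = ∂ⱼ φⁱ (x)`. -/
def jacobianAt (p q : ℕ) (φ : (Fin (p + q) → ℝ) → (Fin (p + q) → ℝ))
    (x : Fin (p + q) → ℝ) : Matrix (Fin (p + q)) (Fin (p + q)) ℝ :=
  Matrix.of fun i j => fderiv ℝ φ x (Pi.single j 1) i

/-- Row vector of partial derivatives of a scalar function at a point. -/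
def gradAt (p q : ℕ) (f : (Fin (p + q) → ℝ) → ℝ) (x : Fin (p + q) → ℝ) :
    Fin (p + q) → ℝ :=
  fun j => fderiv ℝ f x (Pi.single j 1)

/-! ### Auxiliary lemmas -/

lemma hMat_transpose (p q : ℕ) : (hMat p q)ᵀ = hMat p q := by
  simp [hMat]

lemma hMat_mul_hMat (p q : ℕ) : hMat p q * hMat p q = 1 := by
  rw [hMat, diagonal_mul_diagonal]
  have : (fun i : Fin (p+q) => (if (i:ℕ) < p then (1:ℝ) else -1) * (if (i:ℕ) < p then (1:ℝ) else -1)) = fun _ => 1 := by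
    funext i; split_ifs <;> norm_num
  rw [this, diagonal_one]

lemma hMat_inv (p q : ℕ) : (hMat p q)⁻¹ = hMat p q :=
  Matrix.inv_eq_right_inv (hMat_mul_hMat p q)

lemma hdot_comm (p q : ℕ) (u v : Fin (p+q) → ℝ) :
    u ⬝ᵥ (hMat p q *ᵥ v) = v ⬝ᵥ (hMat p q *ᵥ u) := by
  rw [dotProduct_mulVec, dotProduct_comm, ← mulVec_transpose, hMat_transpose]

section Aux

variable {n : ℕ}

/-- The continuous linear map `v ↦ w ⬝ᵥ v`. -/
def dotCLM (w : Fin n → ℝ) : (Fin n → ℝ) →L[ℝ] ℝ :=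
  LinearMap.toContinuousLinearMap
    { toFun := fun v => w ⬝ᵥ v
      map_add' := fun u v => dotProduct_add w u v
      map_smul' := fun r v => by simp }

@[simp] lemma dotCLM_apply (w v : Fin n → ℝ) : dotCLM w v = w ⬝ᵥ v := rfl

/-- The continuous linear map `v ↦ m *ᵥ v`. -/
def mvCLM (m : Matrix (Fin n) (Fin n) ℝ) : (Fin n → ℝ) →L[ℝ] (Fin n → ℝ) :=
  LinearMap.toContinuousLinearMap (Matrix.mulVecLin m)

@[simp] lemma mvCLM_apply (m : Matrix (Fin n) (Fin n) ℝ) (v : Fin n → ℝ) :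
    mvCLM m v = m *ᵥ v := rfl

lemma hasFDerivAt_quad (h : Matrix (Fin n) (Fin n) ℝ) (hsym : hᵀ = h)
    (x : Fin n → ℝ) :
    HasFDerivAt (fun y => y ⬝ᵥ (h *ᵥ y)) (dotCLM ((2:ℝ) • (h *ᵥ x))) x := by
  have key : ∀ i : Fin n, HasFDerivAt (fun y : Fin n → ℝ => y i * (h i ⬝ᵥ y))
      (x i • dotCLM (h i) + (h i ⬝ᵥ x) • ContinuousLinearMap.proj i) x := by
    intro i
    exact ((ContinuousLinearMap.proj i : (Fin n → ℝ) →L[ℝ] ℝ).hasFDerivAt (x := x)).mul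
      ((dotCLM (h i)).hasFDerivAt)
  have hsum := HasFDerivAt.fun_sum (u := Finset.univ) (fun i _ => key i)
  have heq : (fun y : Fin n → ℝ => y ⬝ᵥ (h *ᵥ y)) =
      fun y => ∑ i, y i * (h i ⬝ᵥ y) := rfl
  rw [heq]
  refine hsum.congr_fderiv ?_
  apply ContinuousLinearMap.ext; intro v
  simp only [dotCLM_apply, ContinuousLinearMap.sum_apply, ContinuousLinearMap.add_apply,
    ContinuousLinearMap.smul_apply, ContinuousLinearMap.proj_apply, smul_eq_mul]
  have h1 : ∑ i, (x i * (h i ⬝ᵥ v) + (h i ⬝ᵥ x) * v i)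
      = x ⬝ᵥ (h *ᵥ v) + (h *ᵥ x) ⬝ᵥ v := by
    rw [Finset.sum_add_distrib]; rfl
  rw [h1]
  have h2 : x ⬝ᵥ (h *ᵥ v) = (h *ᵥ x) ⬝ᵥ v := by
    rw [dotProduct_mulVec, ← mulVec_transpose, hsym]
  rw [h2, smul_dotProduct, smul_eq_mul]
  ring

/-- Expansion of `mulVec` for matrices of the conformal-Jacobian shape. -/
lemma mulVec_conf (M : Matrix (Fin n) (Fin n) ℝ) (α : ℝ) (d N u r v : Fin n → ℝ) :
    (Matrix.of fun i j => α * (M i j - u j * d i) - α ^ 2 * (r j * N i)) *ᵥ v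
      = α • (M *ᵥ v) - (α * (u ⬝ᵥ v)) • d - (α ^ 2 * (r ⬝ᵥ v)) • N := by
  funext k
  simp only [mulVec, dotProduct, of_apply, Pi.sub_apply, Pi.smul_apply, smul_eq_mul]
  rw [Finset.mul_sum, Finset.mul_sum, Finset.mul_sum, Finset.sum_mul, Finset.sum_mul,
    ← Finset.sum_sub_distrib, ← Finset.sum_sub_distrib]
  refine Finset.sum_congr rfl fun j _ => by ring

lemma entry_formula (A H : Matrix (Fin n) (Fin n) ℝ) (i j : Fin n) :
    (Aᵀ * H * A) i j = (A *ᵥ Pi.single i 1) ⬝ᵥ (H *ᵥ (A *ᵥ Pi.single j 1)) := by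
  rw [mulVec_single_one, mulVec_single_one]
  simp only [mul_apply, transpose_apply, mulVec, dotProduct, col_apply]
  simp only [Finset.sum_mul, Finset.mul_sum]
  rw [Finset.sum_comm]
  refine Finset.sum_congr rfl fun k _ => Finset.sum_congr rfl fun l _ => by ring

end Aux

lemma mkeyL (p q : ℕ) (m : Matrix (Fin (p + q)) (Fin (p + q)) ℝ)
    (hm : mᵀ * hMat p q * m = hMat p q) (v w : Fin (p + q) → ℝ) :
    (m *ᵥ v) ⬝ᵥ (hMat p q *ᵥ (m *ᵥ w)) = v ⬝ᵥ (hMat p q *ᵥ w) := by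
  rw [← vecMul_transpose, mulVec_mulVec, dotProduct_mulVec, vecMul_vecMul,
    ← Matrix.mul_assoc, hm, ← dotProduct_mulVec]

lemma dL1 (p q : ℕ) (a : ℝ) (b : Fin (p + q) → ℝ)
    (m : Matrix (Fin (p + q)) (Fin (p + q)) ℝ)
    (hm : mᵀ * hMat p q * m = hMat p q) (v : Fin (p + q) → ℝ) :
    (m *ᵥ v) ⬝ᵥ (hMat p q *ᵥ dVec p q a b m) = -a⁻¹ * (b ⬝ᵥ v) := by
  rw [dVec, hMat_inv, mulVec_smul, dotProduct_smul, mkeyL p q m hm, mulVec_mulVec,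
    hMat_mul_hMat, one_mulVec, dotProduct_comm]
  simp [smul_eq_mul]

lemma dL1' (p q : ℕ) (a : ℝ) (b : Fin (p + q) → ℝ)
    (m : Matrix (Fin (p + q)) (Fin (p + q)) ℝ)
    (hm : mᵀ * hMat p q * m = hMat p q) (v : Fin (p + q) → ℝ) :
    dVec p q a b m ⬝ᵥ (hMat p q *ᵥ (m *ᵥ v)) = -a⁻¹ * (b ⬝ᵥ v) := by
  rw [hdot_comm, dL1 p q a b m hm]

lemma dL2 (p q : ℕ) (a : ℝ) (b : Fin (p + q) → ℝ)
    (m : Matrix (Fin (p + q)) (Fin (p + q)) ℝ)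
    (hm : mᵀ * hMat p q * m = hMat p q) :
    dVec p q a b m ⬝ᵥ (hMat p q *ᵥ dVec p q a b m)
      = a⁻¹ * a⁻¹ * (b ⬝ᵥ (hMat p q *ᵥ b)) := by
  rw [dVec, hMat_inv, smul_dotProduct, mulVec_smul, dotProduct_smul,
    mkeyL p q m hm, mulVec_mulVec, hMat_mul_hMat, one_mulVec, smul_eq_mul, smul_eq_mul,
    dotProduct_comm]
  ring

set_option maxHeartbeats 1000000 in
lemma scalar_id (a DD c s bv bw bx pv pw vw : ℝ) (ha : a ≠ 0) (hD : DD ≠ 0)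
    (hDrel : DD = a + bx - 1 / 2 * c * s) :
    DD⁻¹ * (DD⁻¹ * vw - DD⁻¹ * pv * (-a⁻¹ * bw) -
        DD⁻¹ ^ 2 * (bv - c * pv) * (pw - 1 / 2 * s * (-a⁻¹ * bw))) -
      DD⁻¹ * pw *
          (DD⁻¹ * (-a⁻¹ * bv) - DD⁻¹ * pv * (a⁻¹ * a⁻¹ * -(2 * a * c)) -
            DD⁻¹ ^ 2 * (bv - c * pv) * (-a⁻¹ * bx - 1 / 2 * s * (a⁻¹ * a⁻¹ * -(2 * a * c)))) -
      DD⁻¹ ^ 2 * (bw - c * pw) *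
        (DD⁻¹ * pv - DD⁻¹ * pv * (-a⁻¹ * bx) -
            DD⁻¹ ^ 2 * (bv - c * pv) * (s - 1 / 2 * s * (-a⁻¹ * bx)) -
          1 / 2 * s *
            (DD⁻¹ * (-a⁻¹ * bv) - DD⁻¹ * pv * (a⁻¹ * a⁻¹ * -(2 * a * c)) -
              DD⁻¹ ^ 2 * (bv - c * pv) * (-a⁻¹ * bx - 1 / 2 * s * (a⁻¹ * a⁻¹ * -(2 * a * c))))) =
    DD⁻¹ ^ 2 * vw := by
  field_simp
  rw [hDrel]
  ring

set_option maxHeartbeats 1600000 in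
theorem statement2 (p q : ℕ) (hn : 3 ≤ p + q)
    (a : ℝ) (ha : 0 < a) (b : Fin (p + q) → ℝ)
    (m : Matrix (Fin (p + q)) (Fin (p + q)) ℝ)
    (hm : mᵀ * hMat p q * m = hMat p q)
    (x : Fin (p + q) → ℝ) (hx : Dden p q a b x ≠ 0) :
    DifferentiableAt ℝ (phiMap p q a b m) x ∧
    (jacobianAt p q (phiMap p q a b m) x)ᵀ * hMat p q *
        jacobianAt p q (phiMap p q a b m) x
      = (OmegaFn p q a b x) ^ 2 • hMat p q := by
  classical
  have hs : HasFDerivAt (normSq p q) (dotCLM ((2:ℝ) • (hMat p q *ᵥ x))) x :=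
    hasFDerivAt_quad (hMat p q) (hMat_transpose p q) x
  have hb : HasFDerivAt (fun y : Fin (p+q) → ℝ => b ⬝ᵥ y) (dotCLM b) x :=
    (dotCLM b).hasFDerivAt
  have hD : HasFDerivAt (Dden p q a b)
      (dotCLM b - ((1/2) * cVal p q a b) • dotCLM ((2:ℝ) • (hMat p q *ᵥ x))) x :=
    (hb.const_add a).sub (hs.const_mul ((1/2) * cVal p q a b))
  have hF : HasFDerivAt
      (fun y => m *ᵥ y - ((1/2) * normSq p q y) • dVec p q a b m)
      (mvCLM m - (((1:ℝ)/2) • dotCLM ((2:ℝ) • (hMat p q *ᵥ x))).smulRight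
        (dVec p q a b m)) x := by
    have h1 : HasFDerivAt (fun y : Fin (p+q) → ℝ => m *ᵥ y) (mvCLM m) x :=
      (mvCLM m).hasFDerivAt
    exact h1.sub ((hs.const_mul ((1:ℝ)/2)).smul_const (dVec p q a b m))
  have hinv := (hasFDerivAt_inv hx).comp x hD
  have hphi : HasFDerivAt (phiMap p q a b m)
      ((Dden p q a b x)⁻¹ •
        (mvCLM m - (((1:ℝ)/2) • dotCLM ((2:ℝ) • (hMat p q *ᵥ x))).smulRight
          (dVec p q a b m)) +
        ((ContinuousLinearMap.smulRight (1 : ℝ →L[ℝ] ℝ) (-(Dden p q a b x ^ 2)⁻¹)).comp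
          (dotCLM b - ((1/2) * cVal p q a b) • dotCLM ((2:ℝ) • (hMat p q *ᵥ x)))).smulRight
          (m *ᵥ x - ((1/2) * normSq p q x) • dVec p q a b m)) x :=
    hinv.smul hF
  refine ⟨hphi.differentiableAt, ?_⟩
  have hjac : jacobianAt p q (phiMap p q a b m) x = Matrix.of fun i j =>
      (Dden p q a b x)⁻¹ * (m i j - (hMat p q *ᵥ x) j * dVec p q a b m i) -
        ((Dden p q a b x)⁻¹) ^ 2 *
          ((b j - cVal p q a b * (hMat p q *ᵥ x) j) *
            (m *ᵥ x - ((1/2) * normSq p q x) • dVec p q a b m) i) := by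
    funext i j
    show fderiv ℝ (phiMap p q a b m) x (Pi.single j 1) i = _
    rw [hphi.fderiv]
    simp only [ContinuousLinearMap.add_apply, ContinuousLinearMap.smul_apply,
      ContinuousLinearMap.smulRight_apply, ContinuousLinearMap.comp_apply,
      ContinuousLinearMap.coe_sub', Pi.sub_apply, dotCLM_apply, mvCLM_apply,
      ContinuousLinearMap.one_apply, smul_eq_mul, Pi.smul_apply,
      mulVec_single_one, dotProduct_single, smul_dotProduct]
    simp only [Matrix.of_apply, Pi.add_apply, Pi.smul_apply, Pi.sub_apply, smul_eq_mul,
      transpose_apply, col_apply]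
    rw [← inv_pow]
    ring
  rw [hjac]
  have huv : ∀ v : Fin (p+q) → ℝ, (hMat p q *ᵥ x) ⬝ᵥ v = x ⬝ᵥ (hMat p q *ᵥ v) :=
    fun v => by rw [dotProduct_comm, hdot_comm]
  have hr : ∀ v : Fin (p+q) → ℝ,
      (fun j => b j - cVal p q a b * (hMat p q *ᵥ x) j) ⬝ᵥ v
        = b ⬝ᵥ v - cVal p q a b * (x ⬝ᵥ (hMat p q *ᵥ v)) := by
    intro v
    rw [← huv v, dotProduct, dotProduct, dotProduct, Finset.mul_sum,
      ← Finset.sum_sub_distrib]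
    exact Finset.sum_congr rfl fun j _ => by ring
  have key : ∀ v w : Fin (p+q) → ℝ,
      ((Matrix.of fun i j =>
        (Dden p q a b x)⁻¹ * (m i j - (hMat p q *ᵥ x) j * dVec p q a b m i) -
          ((Dden p q a b x)⁻¹) ^ 2 *
            ((b j - cVal p q a b * (hMat p q *ᵥ x) j) *
              (m *ᵥ x - ((1/2) * normSq p q x) • dVec p q a b m) i)) *ᵥ v) ⬝ᵥ
        (hMat p q *ᵥ
          ((Matrix.of fun i j =>
            (Dden p q a b x)⁻¹ * (m i j - (hMat p q *ᵥ x) j * dVec p q a b m i) -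
              ((Dden p q a b x)⁻¹) ^ 2 *
                ((b j - cVal p q a b * (hMat p q *ᵥ x) j) *
                  (m *ᵥ x - ((1/2) * normSq p q x) • dVec p q a b m) i)) *ᵥ w))
      = ((Dden p q a b x)⁻¹) ^ 2 * (v ⬝ᵥ (hMat p q *ᵥ w)) := by
    intro v w
    rw [mulVec_conf m ((Dden p q a b x)⁻¹) (dVec p q a b m)
        (m *ᵥ x - ((1/2) * normSq p q x) • dVec p q a b m) (hMat p q *ᵥ x)
        (fun j => b j - cVal p q a b * (hMat p q *ᵥ x) j) v,
      mulVec_conf m ((Dden p q a b x)⁻¹) (dVec p q a b m)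
        (m *ᵥ x - ((1/2) * normSq p q x) • dVec p q a b m) (hMat p q *ᵥ x)
        (fun j => b j - cVal p q a b * (hMat p q *ᵥ x) j) w,
      hr v, hr w, huv v, huv w]
    simp only [mulVec_sub, mulVec_smul, dotProduct_sub, sub_dotProduct,
      smul_dotProduct, dotProduct_smul, smul_eq_mul,
      mkeyL p q m hm, dL1 p q a b m hm, dL1' p q a b m hm, dL2 p q a b m hm]
    have hcb : cVal p q a b = -(2*a)⁻¹ * (b ⬝ᵥ (hMat p q *ᵥ b)) := by
      rw [cVal, hMat_inv]
    have hbb : b ⬝ᵥ (hMat p q *ᵥ b) = -(2 * a * cVal p q a b) := by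
      rw [hcb]; field_simp
    have hnn : x ⬝ᵥ (hMat p q *ᵥ x) = normSq p q x := rfl
    have hDrel : Dden p q a b x = a + b ⬝ᵥ x - 1/2 * cVal p q a b * normSq p q x := rfl
    rw [hbb, hnn, hdot_comm p q v x]
    generalize Dden p q a b x = DD at hx hDrel ⊢
    generalize cVal p q a b = c at hDrel ⊢
    generalize normSq p q x = s at hDrel ⊢
    generalize b ⬝ᵥ v = bv
    generalize b ⬝ᵥ w = bw
    generalize v ⬝ᵥ (hMat p q *ᵥ w) = vw
    generalize x ⬝ᵥ (hMat p q *ᵥ v) = pv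
    generalize x ⬝ᵥ (hMat p q *ᵥ w) = pw
    generalize b ⬝ᵥ x = bx at hDrel ⊢
    exact scalar_id a DD c s bv bw bx pv pw vw ha.ne' hx hDrel
  ext i j
  rw [entry_formula, key]
  simp [OmegaFn, mulVec_single_one, single_dotProduct, transpose_apply,
    Matrix.smul_apply, smul_eq_mul]
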